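/- Let π : ℂ × ℂ → ℂˣ × ℂˣ be given by π(z₁, z₂) = (exp(z₁), exp(z₂)), and let f : ℂ → ℂˣ × ℂˣ be given by f(t) = (exp(t), exp(i·t)). Then the preimage π⁻¹(f(ℂ)) equals the set {(z₁, z₂) ∈ ℂ × ℂ : (z₂ − i·z₁)/(2πi) ∈ ℤ[i]}, where ℤ[i] = {a + b·i : a, b ∈ ℤ} is the set of Gaussian integers in ℂ. -/
import Mathlib


/-- The map `f : ℂ → ℂˣ × ℂˣ` given by `f t = (exp t, exp (I * t))`. -/
noncomputable def f (t : ℂ) : ℂˣ × ℂˣ :=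
  (Units.mk0 (Complex.exp t) (Complex.exp_ne_zero t),
   Units.mk0 (Complex.exp (Complex.I * t)) (Complex.exp_ne_zero (Complex.I * t)))

/-- The universal covering map `π : ℂ × ℂ → ℂˣ × ℂˣ`, `π (z₁, z₂) = (exp z₁, exp z₂)`. -/
noncomputable def p (z : ℂ × ℂ) : ℂˣ × ℂˣ :=
  (Units.mk0 (Complex.exp z.1) (Complex.exp_ne_zero z.1),
   Units.mk0 (Complex.exp z.2) (Complex.exp_ne_zero z.2))

/-- `π⁻¹(f(ℂ)) = {(z₁, z₂) : (z₂ - I·z₁)/(2πI) ∈ ℤ[i]}`. -/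
theorem stmt2 :
    p ⁻¹' (Set.range f) =
      {z : ℂ × ℂ | ∃ a b : ℤ,
        (z.2 - Complex.I * z.1) / (2 * (Real.pi : ℂ) * Complex.I) = (a : ℂ) + (b : ℂ) * Complex.I} := by
  have hne : (2 * (Real.pi : ℂ) * Complex.I) ≠ 0 := by
    simp [Complex.I_ne_zero, Real.pi_ne_zero, Complex.ofReal_ne_zero]
  ext z
  simp only [Set.mem_preimage, Set.mem_range, Set.mem_setOf_eq]
  constructor
  · rintro ⟨t, ht⟩
    have h1 : Complex.exp t = Complex.exp z.1 := by
      have := congrArg (fun u : ℂˣ × ℂˣ => (u.1 : ℂ)) ht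
      simpa [f, p] using this
    have h2 : Complex.exp (Complex.I * t) = Complex.exp z.2 := by
      have := congrArg (fun u : ℂˣ × ℂˣ => (u.2 : ℂ)) ht
      simpa [f, p] using this
    rw [Complex.exp_eq_exp_iff_exists_int] at h1 h2
    obtain ⟨n, hn⟩ := h1
    obtain ⟨m, hm⟩ := h2
    refine ⟨-m, n, ?_⟩
    rw [div_eq_iff hne]
    push_cast
    linear_combination Complex.I * hn - hm
  · rintro ⟨a, b, hab⟩
    rw [div_eq_iff hne] at hab
    refine ⟨z.1 + (b : ℂ) * (2 * (Real.pi : ℂ) * Complex.I), ?_⟩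
    have e1 : Complex.exp (z.1 + (b : ℂ) * (2 * (Real.pi : ℂ) * Complex.I)) = Complex.exp z.1 := by
      rw [Complex.exp_eq_exp_iff_exists_int]
      exact ⟨b, rfl⟩
    have e2 : Complex.exp (Complex.I * (z.1 + (b : ℂ) * (2 * (Real.pi : ℂ) * Complex.I)))
        = Complex.exp z.2 := by
      rw [Complex.exp_eq_exp_iff_exists_int]
      refine ⟨-a, ?_⟩
      push_cast
      linear_combination -hab
    simp only [f, p, Prod.mk.injEq]
    exact ⟨Units.ext e1, Units.ext e2⟩
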